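/- Let S be a nonempty finite state space, let P and P̃ be row-stochastic matrices on S, let r : S → ℝ, γ ∈ [0,1), β ∈ [0,1], and λ ∈ [0,1). Let R = (1−λ)·∑_{j=1}^∞ λ^{j-1}·P̃^j be the exponential smoothing matrix. Then the exponentially smoothed temporally regularized Bellman operator T, defined by T v = r + γ·((1-β)·(P v) + β·(R v)), satisfies ‖T u − T v‖_∞ ≤ γ·‖u − v‖_∞ for all u, v : S → ℝ, and T has a unique fixed point. -/

import Mathlib

open Matrix

private lemma stoch_mulVec_norm_le {S : Type*} [Fintype S] [Nonempty S]
    (M : Matrix S S ℝ) (hn : ∀ i j, 0 ≤ M i j) (hr : ∀ i, ∑ j, M i j = 1)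
    (w : S → ℝ) : ‖M.mulVec w‖ ≤ ‖w‖ := by
  rw [pi_norm_le_iff_of_nonneg (norm_nonneg w)]
  intro i
  have : M.mulVec w i = ∑ j, M i j * w j := by
    simp [Matrix.mulVec, dotProduct]
  rw [Real.norm_eq_abs, this]
  calc |∑ j, M i j * w j| ≤ ∑ j, |M i j * w j| := Finset.abs_sum_le_sum_abs _ _
    _ ≤ ∑ j, M i j * ‖w‖ := by
        apply Finset.sum_le_sum; intro j _
        rw [abs_mul, abs_of_nonneg (hn i j)]
        exact mul_le_mul_of_nonneg_left (by simpa using norm_le_pi_norm w j) (hn i j)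
    _ = ‖w‖ := by rw [← Finset.sum_mul, hr i, one_mul]

private lemma stoch_pow {S : Type*} [Fintype S] [DecidableEq S] (M : Matrix S S ℝ)
    (hn : ∀ i j, 0 ≤ M i j) (hr : ∀ i, ∑ j, M i j = 1) (k : ℕ) :
    (∀ i j, 0 ≤ (M ^ k) i j) ∧ (∀ i, ∑ j, (M ^ k) i j = 1) := by
  induction k with
  | zero =>
    constructor
    · intro i j
      rw [pow_zero, Matrix.one_apply]
      split <;> norm_num
    · intro i
      simp [Matrix.one_apply]
  | succ k ih =>
    constructor
    · intro i j
      rw [pow_succ, Matrix.mul_apply]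
      exact Finset.sum_nonneg fun l _ => mul_nonneg (ih.1 i l) (hn l j)
    · intro i
      simp only [pow_succ, Matrix.mul_apply]
      rw [Finset.sum_comm]
      calc ∑ l, ∑ j, (M ^ k) i l * M l j
          = ∑ l, (M ^ k) i l * ∑ j, M l j := by
            simp [Finset.mul_sum]
        _ = 1 := by simp [hr, ih.2 i]

set_option maxHeartbeats 1000000 in
/-- The exponentially smoothed temporally regularized Bellman operator
`T v = r + γ • ((1-β) • (P v) + β • (R v))`, where `R = (1−λ) ∑_{j≥1} λ^{j-1} P̃^j`,
is a `γ`-contraction in sup norm and has a unique fixed point. -/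
theorem exp_smoothing_bellman_contraction_unique_fixed_point
    {S : Type*} [Fintype S] [Nonempty S] [DecidableEq S]
    (P Pt : Matrix S S ℝ)
    (hPnonneg : ∀ i j, 0 ≤ P i j) (hProw : ∀ i, ∑ j, P i j = 1)
    (hPtnonneg : ∀ i j, 0 ≤ Pt i j) (hPtrow : ∀ i, ∑ j, Pt i j = 1)
    (r : S → ℝ) (γ β lam : ℝ)
    (hγ0 : 0 ≤ γ) (hγ1 : γ < 1) (hβ0 : 0 ≤ β) (hβ1 : β ≤ 1)
    (hlam0 : 0 ≤ lam) (hlam1 : lam < 1)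
    (R : Matrix S S ℝ)
    (hR : R = ∑' k : ℕ, ((1 - lam) * lam ^ k) • Pt ^ (k + 1))
    (T : (S → ℝ) → (S → ℝ))
    (hT : ∀ v, T v = r + γ • ((1 - β) • P.mulVec v + β • R.mulVec v)) :
    (∀ u v : S → ℝ, ‖T u - T v‖ ≤ γ * ‖u - v‖) ∧ (∃! v : S → ℝ, T v = v) := by
  have hpow := stoch_pow Pt hPtnonneg hPtrow
  have hlam1' : 0 ≤ 1 - lam := by linarith
  have hentry_le : ∀ k i j, (Pt ^ k) i j ≤ 1 := by
    intro k i j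
    calc (Pt ^ k) i j ≤ ∑ j', (Pt ^ k) i j' :=
          Finset.single_le_sum (fun j' _ => (hpow k).1 i j') (Finset.mem_univ j)
      _ = 1 := (hpow k).2 i
  have hgeo : Summable (fun k : ℕ => (1 - lam) * lam ^ k) :=
    (summable_geometric_of_lt_one hlam0 hlam1).mul_left _
  have hsum_entry : ∀ i j,
      Summable (fun k : ℕ => ((1 - lam) * lam ^ k) * (Pt ^ (k + 1)) i j) := by
    intro i j
    refine Summable.of_nonneg_of_le (fun k => ?_) (fun k => ?_) hgeo
    · exact mul_nonneg (mul_nonneg hlam1' (pow_nonneg hlam0 k)) ((hpow (k+1)).1 i j)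
    · calc ((1 - lam) * lam ^ k) * (Pt ^ (k + 1)) i j
          ≤ ((1 - lam) * lam ^ k) * 1 :=
            mul_le_mul_of_nonneg_left (hentry_le (k+1) i j)
              (mul_nonneg hlam1' (pow_nonneg hlam0 k))
        _ = (1 - lam) * lam ^ k := mul_one _
  have hM : HasSum (fun k : ℕ => ((1 - lam) * lam ^ k) • Pt ^ (k + 1))
      (Matrix.of fun i j => ∑' k : ℕ, ((1 - lam) * lam ^ k) * (Pt ^ (k + 1)) i j) := by
    refine Pi.hasSum.2 ?_
    intro i
    refine Pi.hasSum.2 ?_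
    intro j
    exact (hsum_entry i j).hasSum
  have hRentry : ∀ i j, R i j = ∑' k : ℕ, ((1 - lam) * lam ^ k) * (Pt ^ (k + 1)) i j := by
    intro i j
    rw [hR, hM.tsum_eq]
    rfl
  have hRnonneg : ∀ i j, 0 ≤ R i j := by
    intro i j
    rw [hRentry i j]
    exact tsum_nonneg fun k =>
      mul_nonneg (mul_nonneg hlam1' (pow_nonneg hlam0 k)) ((hpow (k+1)).1 i j)
  have hRrow : ∀ i, ∑ j, R i j = 1 := by
    intro i
    calc ∑ j, R i j = ∑ j, ∑' k : ℕ, ((1 - lam) * lam ^ k) * (Pt ^ (k + 1)) i j := by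
          simp_rw [hRentry]
      _ = ∑' k : ℕ, ∑ j, ((1 - lam) * lam ^ k) * (Pt ^ (k + 1)) i j :=
          (Summable.tsum_finsetSum (fun j _ => hsum_entry i j)).symm
      _ = ∑' k : ℕ, (1 - lam) * lam ^ k := by
          congr 1; funext k
          rw [← Finset.mul_sum, (hpow (k+1)).2 i, mul_one]
      _ = 1 := by
          rw [tsum_mul_left, tsum_geometric_of_lt_one hlam0 hlam1]
          exact mul_inv_cancel₀ (by linarith)
  have key : ∀ u v : S → ℝ, ‖T u - T v‖ ≤ γ * ‖u - v‖ := by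
    intro u v
    have hdiff : T u - T v
        = γ • ((1 - β) • P.mulVec (u - v) + β • R.mulVec (u - v)) := by
      rw [hT, hT, Matrix.mulVec_sub, Matrix.mulVec_sub]
      ext i
      simp [smul_sub]
      ring
    rw [hdiff, norm_smul, Real.norm_eq_abs, abs_of_nonneg hγ0]
    apply mul_le_mul_of_nonneg_left _ hγ0
    calc ‖(1 - β) • P.mulVec (u - v) + β • R.mulVec (u - v)‖
        ≤ ‖(1 - β) • P.mulVec (u - v)‖ + ‖β • R.mulVec (u - v)‖ := norm_add_le _ _
      _ ≤ (1 - β) * ‖u - v‖ + β * ‖u - v‖ := by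
          apply add_le_add
          · rw [norm_smul, Real.norm_eq_abs, abs_of_nonneg (by linarith)]
            exact mul_le_mul_of_nonneg_left
              (stoch_mulVec_norm_le P hPnonneg hProw _) (by linarith)
          · rw [norm_smul, Real.norm_eq_abs, abs_of_nonneg hβ0]
            exact mul_le_mul_of_nonneg_left
              (stoch_mulVec_norm_le R hRnonneg hRrow _) hβ0
      _ = ‖u - v‖ := by ring
  refine ⟨key, ?_⟩
  have lip : LipschitzWith ⟨γ, hγ0⟩ T :=
    LipschitzWith.of_dist_le_mul fun u v => by
      rw [dist_eq_norm, dist_eq_norm]; exact key u v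
  have hc : ContractingWith ⟨γ, hγ0⟩ T := ⟨by exact_mod_cast hγ1, lip⟩
  exact ⟨hc.fixedPoint T, hc.fixedPoint_isFixedPt, fun v hv => hc.fixedPoint_unique hv⟩
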